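/- Let (Y_n) be non-negative random variables adapted to a filtration (F_n) with E[Y_{n+1} | F_n] ≤ (1 + c₁γ_n²)Y_n - c₂γ_n Y_n^{2β} + c₃γ_n², where β ∈ (1/2, 1], c₁, c₃ ≥ 0, c₂ > 0, and γ_n = Θ(n^{-θ}) for θ ∈ (1/2, 1). Then for any η ∈ (max{2-2θ, (θ+2β-2)/(2β-1)}, 1), Y_n → 0 almost surely with rate Y_n ∈ o(n^{-(1-η)}) a.s. -/

import Mathlib

open Filter MeasureTheory

lemma aux_max_trick {A B t p : ℝ} (hA : 0 ≤ A) (hB : 0 < B) (ht : 0 ≤ t) (hp : 1 < p) :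
    A * t - B * t ^ p ≤ A * (A / B) ^ (p - 1)⁻¹ := by
  have hs : 0 ≤ (A / B) ^ (p - 1)⁻¹ := Real.rpow_nonneg (div_nonneg hA hB.le) _
  rcases le_or_gt t ((A / B) ^ (p - 1)⁻¹) with h | h
  · have h1 : 0 ≤ B * t ^ p := mul_nonneg hB.le (Real.rpow_nonneg ht _)
    nlinarith [mul_le_mul_of_nonneg_left h hA]
  · have ht' : 0 < t := hs.trans_lt h
    have hp1 : (0:ℝ) ≤ p - 1 := by linarith
    have h2 : A / B ≤ t ^ (p - 1) := by
      have h2' := Real.rpow_le_rpow hs h.le hp1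
      rwa [Real.rpow_inv_rpow (div_nonneg hA hB.le) (by linarith : p - 1 ≠ 0)] at h2'
    have h3 : A * t ≤ B * t ^ p := by
      have h4 : A ≤ t ^ (p - 1) * B := (div_le_iff₀ hB).mp h2
      have h5 : t ^ (p - 1) * t = t ^ p := by
        rw [← Real.rpow_add_one ht'.ne' (p - 1), sub_add_cancel]
      calc A * t ≤ t ^ (p - 1) * B * t := mul_le_mul_of_nonneg_right h4 ht
        _ = B * t ^ p := by rw [← h5]; ring
    nlinarith [mul_nonneg hA hs]

set_option maxHeartbeats 2000000 in
theorem stmt_11 {Ω : Type*} {m0 : MeasurableSpace Ω} (μ : Measure Ω) [IsProbabilityMeasure μ]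
    (ℱ : Filtration ℕ m0) (Y : ℕ → Ω → ℝ) (γ : ℕ → ℝ)
    (c₁ c₂ c₃ β θ : ℝ)
    (hc₁ : 0 ≤ c₁) (hc₃ : 0 ≤ c₃) (hc₂ : 0 < c₂)
    (hβ : 1/2 < β ∧ β ≤ 1) (hθ : 1/2 < θ ∧ θ < 1)
    (hγpos : ∀ n, 0 < γ n)
    (hγΘ : ∃ C₁ C₂ : ℝ, 0 < C₁ ∧ 0 < C₂ ∧ ∀ n : ℕ, 1 ≤ n →
      C₁ * (n : ℝ) ^ (-θ) ≤ γ n ∧ γ n ≤ C₂ * (n : ℝ) ^ (-θ))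
    (hY : ∀ n ω, 0 ≤ Y n ω)
    (hYad : Adapted ℱ Y)
    (hint : ∀ n, Integrable (Y n) μ)
    (hrec : ∀ n : ℕ, ∀ᵐ ω ∂μ,
      (μ[Y (n+1) | ℱ n]) ω ≤ (1 + c₁ * γ n ^ 2) * Y n ω - c₂ * γ n * Y n ω ^ (2*β) + c₃ * γ n ^ 2) :
    ∀ η : ℝ, max (2 - 2*θ) ((θ + 2*β - 2)/(2*β - 1)) < η → η < 1 →
      ∀ᵐ ω ∂μ, Tendsto (fun n : ℕ => (n : ℝ) ^ (1 - η) * Y n ω) atTop (nhds 0) := by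
  obtain ⟨hβ1, hβ2⟩ := hβ
  obtain ⟨hθ1, hθ2⟩ := hθ
  obtain ⟨C₁, C₂, hC₁, hC₂, hγb⟩ := hγΘ
  intro η hηmax hη1
  set p := 2 * β with hpdef
  have hp1 : 1 < p := by rw [hpdef]; linarith
  have hpm1 : (0:ℝ) < p - 1 := by linarith
  have hp2 : p ≤ 2 := by rw [hpdef]; linarith
  have h2θ : 2 - 2*θ < η := lt_of_le_of_lt (le_max_left _ _) hηmax
  have hkey' : (θ + p - 2)/(p - 1) < η := lt_of_le_of_lt (le_max_right _ _) hηmax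
  have hkey : θ + p - 2 < η * (p - 1) := by
    have := (div_lt_iff₀ hpm1).mp hkey'
    linarith
  have hη0 : 0 < η := by linarith
  have h1η0 : 0 < 1 - η := by linarith
  -- basic objects
  set a : ℕ → ℝ := fun n => (n:ℝ) ^ (1 - η) with hadef
  have ha_nonneg : ∀ n, 0 ≤ a n := fun n => Real.rpow_nonneg (Nat.cast_nonneg n) _
  have ha_mono : ∀ {i j : ℕ}, i ≤ j → a i ≤ a j := fun {i j} h =>
    Real.rpow_le_rpow (Nat.cast_nonneg i) (Nat.cast_le.mpr h) h1η0.le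
  have ha_pos : ∀ n : ℕ, 0 < a (n+1) := fun n =>
    Real.rpow_pos_of_pos (by exact_mod_cast Nat.succ_pos n) _
  set A : ℕ → ℝ := fun n => a (n+1) * (1 + c₁ * γ n ^ 2) - a n with hAdef
  set B : ℕ → ℝ := fun n => c₂ / 2 * γ n * a (n+1) with hBdef
  set u : ℕ → Ω → ℝ := fun n ω => B n * Y n ω ^ p with hudef
  set e : ℕ → ℝ := fun n => A n * (A n / B n) ^ (p - 1)⁻¹ + c₃ * a (n+1) * γ n ^ 2 with hedef
  have hA_nonneg : ∀ n, 0 ≤ A n := by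
    intro n
    have h1 : a n ≤ a (n+1) := ha_mono (Nat.le_succ n)
    have h2 : a (n+1) ≤ a (n+1) * (1 + c₁ * γ n ^ 2) :=
      le_mul_of_one_le_right (ha_nonneg _) (by nlinarith [sq_nonneg (γ n)])
    simp only [hAdef]
    linarith
  have hB_pos : ∀ n, 0 < B n := fun n =>
    mul_pos (mul_pos (half_pos hc₂) (hγpos n)) (ha_pos n)
  have he_nonneg : ∀ n, 0 ≤ e n := by
    intro n
    have h1 : 0 ≤ A n * (A n / B n) ^ (p - 1)⁻¹ :=
      mul_nonneg (hA_nonneg n) (Real.rpow_nonneg (div_nonneg (hA_nonneg n) (hB_pos n).le) _)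
    have h2 : 0 ≤ c₃ * a (n+1) * γ n ^ 2 := by positivity
    simp only [hedef]; linarith
  -- the core pathwise inequality
  have core : ∀ (n : ℕ) (t : ℝ), 0 ≤ t →
      a (n+1) * ((1 + c₁ * γ n ^ 2) * t - c₂ * γ n * t ^ p + c₃ * γ n ^ 2)
        ≤ a n * t - B n * t ^ p + e n := by
    intro n t ht
    have h := aux_max_trick (hA_nonneg n) (hB_pos n) ht hp1
    have expand : a (n+1) * ((1 + c₁ * γ n ^ 2) * t - c₂ * γ n * t ^ p + c₃ * γ n ^ 2)
        = a n * t + (A n * t - B n * t ^ p) - B n * t ^ p + c₃ * a (n+1) * γ n ^ 2 := by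
      simp only [hAdef, hBdef]; ring
    rw [expand]
    simp only [hedef]
    linarith
  -- integrability of Y^p
  have hYp_meas : ∀ n, StronglyMeasurable[ℱ n] (fun ω => Y n ω ^ p) := by
    intro n
    exact (continuous_id.rpow_const fun x => Or.inr (by linarith : (0:ℝ) ≤ p)).comp_stronglyMeasurable
      (hYad n).stronglyMeasurable
  have hrec_nn : ∀ n : ℕ, ∀ᵐ ω ∂μ,
      0 ≤ (1 + c₁ * γ n ^ 2) * Y n ω - c₂ * γ n * Y n ω ^ p + c₃ * γ n ^ 2 := by
    intro n
    have h0 : 0 ≤ᵐ[μ] μ[Y (n+1) | ℱ n] := condExp_nonneg (ae_of_all _ fun ω => hY (n+1) ω)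
    filter_upwards [hrec n, h0] with ω h1 h2
    exact le_trans h2 h1
  have hYp_int : ∀ n, Integrable (fun ω => Y n ω ^ p) μ := by
    intro n
    have hcγ : 0 < c₂ * γ n := mul_pos hc₂ (hγpos n)
    refine Integrable.mono'
      ((((hint n).const_mul (1 + c₁ * γ n ^ 2)).add (integrable_const (c₃ * γ n ^ 2))).const_mul
        (c₂ * γ n)⁻¹)
      (((hYp_meas n).mono (ℱ.le n)).aestronglyMeasurable) ?_
    filter_upwards [hrec_nn n] with ω h1
    rw [Real.norm_eq_abs, abs_of_nonneg (Real.rpow_nonneg (hY n ω) p)]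
    rw [le_inv_mul_iff₀ hcγ]
    simp only [Pi.add_apply]
    linarith
  have hu_int : ∀ n, Integrable (u n) μ := by
    intro n
    simp only [hudef]
    exact (hYp_int n).const_mul (B n)
  have hu_nonneg : ∀ n ω, 0 ≤ u n ω := fun n ω =>
    mul_nonneg (hB_pos n).le (Real.rpow_nonneg (hY n ω) p)
  have hu_meas : ∀ n, StronglyMeasurable[ℱ n] (u n) := fun n => (hYp_meas n).const_mul (B n)
  -- the shifted filtration and the auxiliary process
  set 𝒢 : Filtration ℕ m0 :=
    ⟨fun n => ℱ (n+1), fun i j hij => ℱ.mono (Nat.succ_le_succ hij), fun n => ℱ.le (n+1)⟩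
    with h𝒢def
  have h𝒢 : ∀ n, 𝒢 n = ℱ (n+1) := fun n => rfl
  set Z : ℕ → Ω → ℝ := fun n ω =>
    a (n+1) * Y (n+1) ω + (∑ k ∈ Finset.range n, u (k+1) ω) - ∑ k ∈ Finset.range n, e (k+1)
    with hZdef
  have hZ_int : ∀ n, Integrable (Z n) μ := by
    intro n
    simp only [hZdef]
    exact (((hint (n+1)).const_mul _).add
      (integrable_finset_sum _ fun k _ => hu_int (k+1))).sub (integrable_const _)
  have hsum_meas : ∀ n, StronglyMeasurable[ℱ (n+1)]
      (fun ω => ∑ k ∈ Finset.range (n+1), u (k+1) ω) := by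
    intro n
    rw [← Finset.sum_fn]
    refine Finset.stronglyMeasurable_sum _ fun k hk => ?_
    have hk' := Finset.mem_range.mp hk
    exact (hu_meas (k+1)).mono (ℱ.mono (by omega))
  have hZ_adapted : StronglyAdapted 𝒢 Z := by
    intro n
    rw [h𝒢 n]
    simp only [hZdef]
    refine (((hYad (n+1)).stronglyMeasurable.const_mul _).add ?_).sub stronglyMeasurable_const
    rw [← Finset.sum_fn]
    refine Finset.stronglyMeasurable_sum _ fun k hk => ?_
    have hk' := Finset.mem_range.mp hk
    exact (hu_meas (k+1)).mono (ℱ.mono (by omega))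
  have hstep : ∀ n, μ[Z (n+1) | 𝒢 n] ≤ᵐ[μ] Z n := by
    intro n
    set g : Ω → ℝ := fun ω =>
      (∑ k ∈ Finset.range (n+1), u (k+1) ω) - ∑ k ∈ Finset.range (n+1), e (k+1) with hgdef
    have hg_int : Integrable g μ :=
      (integrable_finset_sum _ fun k _ => hu_int (k+1)).sub (integrable_const _)
    have hg_meas : StronglyMeasurable[ℱ (n+1)] g :=
      (hsum_meas n).sub stronglyMeasurable_const
    have hf_int : Integrable (a (n+2) • Y (n+2)) μ := by
      exact (hint (n+2)).smul (a (n+2))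
    have hG : Z (n+1) = (a (n+2) • Y (n+2)) + g := by
      funext ω
      simp only [hZdef, hgdef, Pi.add_apply, Pi.smul_apply, smul_eq_mul]
      ring
    have h1 : μ[Z (n+1) | 𝒢 n] =ᵐ[μ] μ[a (n+2) • Y (n+2) | 𝒢 n] + μ[g | 𝒢 n] := by
      rw [hG]; exact condExp_add hf_int hg_int _
    have h2 : μ[g | 𝒢 n] = g := by
      rw [h𝒢 n]
      exact condExp_of_stronglyMeasurable (ℱ.le (n+1)) hg_meas hg_int
    have h3 : μ[a (n+2) • Y (n+2) | 𝒢 n] =ᵐ[μ] a (n+2) • μ[Y (n+2) | 𝒢 n] :=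
      condExp_smul (a (n+2)) (Y (n+2)) _
    have h4 : ∀ᵐ ω ∂μ, (μ[Y (n+2) | 𝒢 n]) ω
        ≤ (1 + c₁ * γ (n+1) ^ 2) * Y (n+1) ω - c₂ * γ (n+1) * Y (n+1) ω ^ p
          + c₃ * γ (n+1) ^ 2 := by
      rw [h𝒢 n]
      exact hrec (n+1)
    filter_upwards [h1, h3, h4] with ω e1 e3 e4
    have e2 : (μ[g | 𝒢 n]) ω = g ω := by rw [h2]
    have hcore := core (n+1) (Y (n+1) ω) (hY (n+1) ω)
    have emain : (μ[Z (n+1) | 𝒢 n]) ω = a (n+2) * (μ[Y (n+2) | 𝒢 n]) ω + g ω := by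
      rw [e1, Pi.add_apply, e3, e2, Pi.smul_apply, smul_eq_mul]
    rw [emain]
    have e5 : a (n+2) * (μ[Y (n+2) | 𝒢 n]) ω
        ≤ a (n+1) * Y (n+1) ω - B (n+1) * Y (n+1) ω ^ p + e (n+1) :=
      le_trans (mul_le_mul_of_nonneg_left e4 (ha_nonneg (n+2))) hcore
    have e6 : g ω = (∑ k ∈ Finset.range n, u (k+1) ω) + u (n+1) ω
        - ((∑ k ∈ Finset.range n, e (k+1)) + e (n+1)) := by
      simp only [hgdef, Finset.sum_range_succ]
    have e7 : u (n+1) ω = B (n+1) * Y (n+1) ω ^ p := by simp only [hudef]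
    simp only [hZdef]
    rw [e6, e7]
    linarith
  -- deterministic bounds
  set q : ℝ := (p - 1)⁻¹ with hqdef
  have hq0 : 0 < q := inv_pos.mpr hpm1
  set K : ℝ := 1 + 2 * c₁ * C₂ ^ 2 with hKdef
  have hK0 : 0 < K := by positivity
  set cB : ℝ := c₂ / 2 * C₁ with hcBdef
  have hcB0 : 0 < cB := by positivity
  set r₁ : ℝ := (θ - 1) * q - η with hr₁def
  set r₂ : ℝ := 1 - η - 2 * θ with hr₂def
  have hq1 : (p - 1) * q = 1 := mul_inv_cancel₀ hpm1.ne'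
  have hr₁ : r₁ < -1 := by
    have h : θ - 1 < (η - 1) * (p - 1) := by nlinarith
    have h2 : (θ - 1) * q < ((η - 1) * (p - 1)) * q := mul_lt_mul_of_pos_right h hq0
    rw [mul_assoc, hq1, mul_one] at h2
    rw [hr₁def]; linarith
  have hr₂ : r₂ < -1 := by rw [hr₂def]; linarith
  -- pointwise facts for m ≥ 1
  have hcast : ∀ m : ℕ, ((m+1 : ℕ) : ℝ) = (m : ℝ) + 1 := by intro m; push_cast; ring
  have hxfacts : ∀ m : ℕ, 1 ≤ m → (1 : ℝ) ≤ (m : ℝ) ∧ (0 : ℝ) < (m : ℝ) := by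
    intro m hm
    constructor
    · exact_mod_cast hm
    · exact_mod_cast Nat.lt_of_lt_of_le Nat.zero_lt_one hm
  have ha_succ_le : ∀ m : ℕ, 1 ≤ m → a (m+1) ≤ 2 * (m : ℝ) ^ (1 - η) := by
    intro m hm
    obtain ⟨hx1, hx0⟩ := hxfacts m hm
    have h1 : a (m+1) = ((m : ℝ) + 1) ^ (1 - η) := by rw [hadef]; simp [hcast m]
    have h2 : ((m : ℝ) + 1) ^ (1 - η) ≤ (2 * (m : ℝ)) ^ (1 - η) :=
      Real.rpow_le_rpow (by linarith) (by linarith) h1η0.le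
    have h3 : (2 * (m : ℝ)) ^ (1 - η) = 2 ^ (1 - η) * (m : ℝ) ^ (1 - η) :=
      Real.mul_rpow (by norm_num) hx0.le
    have h4 : (2 : ℝ) ^ (1 - η) ≤ 2 := by
      calc (2 : ℝ) ^ (1 - η) ≤ 2 ^ (1 : ℝ) :=
            Real.rpow_le_rpow_of_exponent_le one_le_two (by linarith)
        _ = 2 := Real.rpow_one 2
    calc a (m+1) ≤ 2 ^ (1 - η) * (m : ℝ) ^ (1 - η) := by rw [h1, ← h3]; exact h2
      _ ≤ 2 * (m : ℝ) ^ (1 - η) :=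
          mul_le_mul_of_nonneg_right h4 (Real.rpow_nonneg hx0.le _)
  have hγsq : ∀ m : ℕ, 1 ≤ m → γ m ^ 2 ≤ C₂ ^ 2 * (m : ℝ) ^ (-(2 * θ)) := by
    intro m hm
    obtain ⟨hx1, hx0⟩ := hxfacts m hm
    have h1 : γ m ^ 2 ≤ (C₂ * (m : ℝ) ^ (-θ)) ^ 2 := by
      have := (hγb m hm).2
      exact pow_le_pow_left₀ (hγpos m).le this 2
    have h2 : (C₂ * (m : ℝ) ^ (-θ)) ^ 2 = C₂ ^ 2 * (m : ℝ) ^ (-(2 * θ)) := by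
      rw [mul_pow]
      congr 1
      rw [← Real.rpow_natCast ((m : ℝ) ^ (-θ)) 2, ← Real.rpow_mul hx0.le]
      congr 1
      push_cast
      ring
    rw [← h2]; exact h1
  have ha_diff : ∀ m : ℕ, 1 ≤ m → a (m+1) - a m ≤ (m : ℝ) ^ (-η) := by
    intro m hm
    obtain ⟨hx1, hx0⟩ := hxfacts m hm
    have hinv0 : (0 : ℝ) ≤ ((m : ℝ))⁻¹ := by positivity
    have h1 : a (m+1) = (m : ℝ) ^ (1 - η) * (1 + ((m : ℝ))⁻¹) ^ (1 - η) := by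
      rw [hadef]
      simp only
      rw [hcast m, ← Real.mul_rpow hx0.le (by positivity)]
      congr 1
      field_simp
    have h2 : (1 + ((m : ℝ))⁻¹) ^ (1 - η) ≤ 1 + (1 - η) * ((m : ℝ))⁻¹ :=
      _root_.rpow_one_add_le_one_add_mul_self (by linarith) h1η0.le (by linarith)
    have h3 : (m : ℝ) ^ (1 - η) * ((m : ℝ))⁻¹ = (m : ℝ) ^ (-η) := by
      rw [← Real.rpow_neg_one (m : ℝ), ← Real.rpow_add hx0]
      ring_nf
    have h4 : a (m+1) ≤ (m : ℝ) ^ (1 - η) + (1 - η) * (m : ℝ) ^ (-η) := by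
      rw [h1]
      calc (m : ℝ) ^ (1 - η) * (1 + ((m : ℝ))⁻¹) ^ (1 - η)
          ≤ (m : ℝ) ^ (1 - η) * (1 + (1 - η) * ((m : ℝ))⁻¹) :=
            mul_le_mul_of_nonneg_left h2 (Real.rpow_nonneg hx0.le _)
        _ = (m : ℝ) ^ (1 - η) + (1 - η) * ((m : ℝ) ^ (1 - η) * ((m : ℝ))⁻¹) := by ring
        _ = (m : ℝ) ^ (1 - η) + (1 - η) * (m : ℝ) ^ (-η) := by rw [h3]
    have h5 : a m = (m : ℝ) ^ (1 - η) := by rw [hadef]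
    have h6 : 0 ≤ (m : ℝ) ^ (-η) := Real.rpow_nonneg hx0.le _
    have h7 : (1 - η) * (m : ℝ) ^ (-η) ≤ (m : ℝ) ^ (-η) :=
      mul_le_of_le_one_left h6 (by linarith)
    rw [h5]
    linarith
  have hA_bound : ∀ m : ℕ, 1 ≤ m → A m ≤ K * (m : ℝ) ^ (-η) := by
    intro m hm
    obtain ⟨hx1, hx0⟩ := hxfacts m hm
    have h1 : A m = (a (m+1) - a m) + a (m+1) * (c₁ * γ m ^ 2) := by
      simp only [hAdef]; ring
    have h2 : a (m+1) * (c₁ * γ m ^ 2) ≤ 2 * (m : ℝ) ^ (1 - η) * (c₁ * (C₂ ^ 2 * (m : ℝ) ^ (-(2 * θ)))) := by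
      refine mul_le_mul (ha_succ_le m hm) ?_ (by positivity) (by positivity)
      exact mul_le_mul_of_nonneg_left (hγsq m hm) hc₁
    have h3 : (m : ℝ) ^ (1 - η) * (m : ℝ) ^ (-(2 * θ)) = (m : ℝ) ^ (1 - η - 2 * θ) := by
      rw [← Real.rpow_add hx0]; ring_nf
    have h4 : (m : ℝ) ^ (1 - η - 2 * θ) ≤ (m : ℝ) ^ (-η) :=
      Real.rpow_le_rpow_of_exponent_le hx1 (by linarith)
    have h5 : 2 * (m : ℝ) ^ (1 - η) * (c₁ * (C₂ ^ 2 * (m : ℝ) ^ (-(2 * θ))))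
        = 2 * c₁ * C₂ ^ 2 * (m : ℝ) ^ (1 - η - 2 * θ) := by
      rw [← h3]; ring
    have h6 : a (m+1) * (c₁ * γ m ^ 2) ≤ 2 * c₁ * C₂ ^ 2 * (m : ℝ) ^ (-η) := by
      calc a (m+1) * (c₁ * γ m ^ 2) ≤ 2 * c₁ * C₂ ^ 2 * (m : ℝ) ^ (1 - η - 2 * θ) := by
            rw [← h5]; exact h2
        _ ≤ 2 * c₁ * C₂ ^ 2 * (m : ℝ) ^ (-η) :=
            mul_le_mul_of_nonneg_left h4 (by positivity)
    have h7 := ha_diff m hm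
    calc A m = (a (m+1) - a m) + a (m+1) * (c₁ * γ m ^ 2) := h1
      _ ≤ (m : ℝ) ^ (-η) + 2 * c₁ * C₂ ^ 2 * (m : ℝ) ^ (-η) := add_le_add h7 h6
      _ = K * (m : ℝ) ^ (-η) := by rw [hKdef]; ring
  have hB_low : ∀ m : ℕ, 1 ≤ m → cB * (m : ℝ) ^ (1 - η - θ) ≤ B m := by
    intro m hm
    obtain ⟨hx1, hx0⟩ := hxfacts m hm
    have h1 : a m ≤ a (m+1) := ha_mono (Nat.le_succ m)
    have h2 : (m : ℝ) ^ (1 - η) ≤ a (m+1) := by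
      have : a m = (m : ℝ) ^ (1 - η) := by rw [hadef]
      linarith
    have h3 : C₁ * (m : ℝ) ^ (-θ) ≤ γ m := (hγb m hm).1
    have h4 : c₂ / 2 * (C₁ * (m : ℝ) ^ (-θ)) * ((m : ℝ) ^ (1 - η)) ≤ B m := by
      simp only [hBdef]
      exact mul_le_mul (mul_le_mul_of_nonneg_left h3 (by positivity)) h2 (by positivity)
        (mul_nonneg (by positivity) (hγpos m).le)
    have h5 : c₂ / 2 * (C₁ * (m : ℝ) ^ (-θ)) * ((m : ℝ) ^ (1 - η))
        = cB * (m : ℝ) ^ (1 - η - θ) := by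
      rw [hcBdef, show (1 : ℝ) - η - θ = -θ + (1 - η) by ring, Real.rpow_add hx0]
      ring
    rw [← h5]; exact h4
  have he_bound : ∀ m : ℕ, 1 ≤ m →
      e m ≤ K * (K / cB) ^ q * (m : ℝ) ^ r₁ + 2 * c₃ * C₂ ^ 2 * (m : ℝ) ^ r₂ := by
    intro m hm
    obtain ⟨hx1, hx0⟩ := hxfacts m hm
    have hAm := hA_bound m hm
    have hBm := hB_low m hm
    have hBpos := hB_pos m
    have hxp : (0 : ℝ) < cB * (m : ℝ) ^ (1 - η - θ) := by positivity
    have f6 : A m / B m ≤ K / cB * (m : ℝ) ^ (θ - 1) := by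
      have hxθ : (m : ℝ) ^ (θ - 1) = (m : ℝ) ^ (-η) / (m : ℝ) ^ (1 - η - θ) := by
        rw [← Real.rpow_sub hx0]
        congr 1
        ring
      have hd : K * (m : ℝ) ^ (-η) / (cB * (m : ℝ) ^ (1 - η - θ))
          = K / cB * (m : ℝ) ^ (θ - 1) := by
        rw [hxθ, mul_div_mul_comm]
      calc A m / B m ≤ K * (m : ℝ) ^ (-η) / (cB * (m : ℝ) ^ (1 - η - θ)) :=
            div_le_div₀ (by positivity) hAm hxp hBm
        _ = K / cB * (m : ℝ) ^ (θ - 1) := hd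
    have f7 : (A m / B m) ^ q ≤ (K / cB) ^ q * (m : ℝ) ^ ((θ - 1) * q) := by
      have h := Real.rpow_le_rpow (div_nonneg (hA_nonneg m) hBpos.le) f6 hq0.le
      rwa [Real.mul_rpow (by positivity) (Real.rpow_nonneg hx0.le _),
        ← Real.rpow_mul hx0.le] at h
    have f8 : A m * (A m / B m) ^ q ≤ K * (K / cB) ^ q * (m : ℝ) ^ r₁ := by
      have h := mul_le_mul hAm f7
        (Real.rpow_nonneg (div_nonneg (hA_nonneg m) hBpos.le) _) (by positivity)
      calc A m * (A m / B m) ^ q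
          ≤ K * (m : ℝ) ^ (-η) * ((K / cB) ^ q * (m : ℝ) ^ ((θ - 1) * q)) := h
        _ = K * (K / cB) ^ q * ((m : ℝ) ^ (-η) * (m : ℝ) ^ ((θ - 1) * q)) := by ring
        _ = K * (K / cB) ^ q * (m : ℝ) ^ r₁ := by
            rw [← Real.rpow_add hx0, hr₁def]
            ring_nf
    have f9 : c₃ * a (m+1) * γ m ^ 2 ≤ 2 * c₃ * C₂ ^ 2 * (m : ℝ) ^ r₂ := by
      have h := mul_le_mul (ha_succ_le m hm) (hγsq m hm) (by positivity) (by positivity)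
      have h2 : 2 * (m : ℝ) ^ (1 - η) * (C₂ ^ 2 * (m : ℝ) ^ (-(2 * θ)))
          = 2 * C₂ ^ 2 * (m : ℝ) ^ r₂ := by
        rw [hr₂def, show (1 : ℝ) - η - 2 * θ = (1 - η) + -(2 * θ) by ring, Real.rpow_add hx0]
        ring
      calc c₃ * a (m+1) * γ m ^ 2 = c₃ * (a (m+1) * γ m ^ 2) := by ring
        _ ≤ c₃ * (2 * (m : ℝ) ^ (1 - η) * (C₂ ^ 2 * (m : ℝ) ^ (-(2 * θ)))) :=
            mul_le_mul_of_nonneg_left (by linarith [h]) hc₃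
        _ = c₃ * (2 * C₂ ^ 2 * (m : ℝ) ^ r₂) := by rw [h2]
        _ = 2 * c₃ * C₂ ^ 2 * (m : ℝ) ^ r₂ := by ring
    have : e m = A m * (A m / B m) ^ q + c₃ * a (m+1) * γ m ^ 2 := by
      simp only [hedef, hqdef]
    rw [this]
    linarith
  -- summability of the error terms
  have he_sum : Summable (fun n : ℕ => e (n+1)) := by
    have hg : Summable (fun n : ℕ =>
        K * (K / cB) ^ q * (n : ℝ) ^ r₁ + 2 * c₃ * C₂ ^ 2 * (n : ℝ) ^ r₂) :=
      ((Real.summable_nat_rpow.mpr hr₁).mul_left _).add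
        ((Real.summable_nat_rpow.mpr hr₂).mul_left _)
    have hg' := (summable_nat_add_iff 1).mpr hg
    exact Summable.of_nonneg_of_le (fun n => he_nonneg (n+1))
      (fun n => he_bound (n+1) (Nat.le_add_left 1 n)) hg'
  set Et : ℝ := ∑' n : ℕ, e (n+1) with hEtdef
  have hEt0 : 0 ≤ Et := tsum_nonneg fun n => he_nonneg (n+1)
  have hpartial : ∀ n : ℕ, ∑ k ∈ Finset.range n, e (k+1) ≤ Et := fun n =>
    Summable.sum_le_tsum (Finset.range n) (fun k _ => he_nonneg (k+1)) he_sum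
  have hpartial0 : ∀ n : ℕ, 0 ≤ ∑ k ∈ Finset.range n, e (k+1) := fun n =>
    Finset.sum_nonneg fun k _ => he_nonneg (k+1)
  have husum0 : ∀ n ω, 0 ≤ ∑ k ∈ Finset.range n, u (k+1) ω := fun n ω =>
    Finset.sum_nonneg fun k _ => hu_nonneg (k+1) ω
  have hZ_lb : ∀ n ω, -Et ≤ Z n ω := by
    intro n ω
    have h1 : 0 ≤ a (n+1) * Y (n+1) ω := mul_nonneg (ha_nonneg _) (hY _ _)
    have h2 := husum0 n ω
    have h3 := hpartial n
    simp only [hZdef]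
    linarith
  -- the supermartingale and its convergence
  have hsuper : Supermartingale Z 𝒢 μ := supermartingale_nat hZ_adapted hZ_int hstep
  have hZ_exp : ∀ n, ∫ ω, Z n ω ∂μ ≤ ∫ ω, Z 0 ω ∂μ := by
    intro n
    have h := hsuper.setIntegral_le (Nat.zero_le n) (MeasurableSet.univ)
    simpa [setIntegral_univ] using h
  have hbdd : ∀ n, eLpNorm (Z n) 1 μ ≤ ENNReal.ofReal ((∫ ω, Z 0 ω ∂μ) + 2 * Et) := by
    intro n
    have habs : ∀ ω, |Z n ω| ≤ Z n ω + 2 * Et := by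
      intro ω
      rcases abs_cases (Z n ω) with ⟨h, _⟩ | ⟨h, _⟩
      · linarith
      · have := hZ_lb n ω; linarith
    have hi : ∫ ω, |Z n ω| ∂μ ≤ (∫ ω, Z 0 ω ∂μ) + 2 * Et := by
      have h1 : ∫ ω, |Z n ω| ∂μ ≤ ∫ ω, (Z n ω + 2 * Et) ∂μ :=
        integral_mono (hZ_int n).abs ((hZ_int n).add (integrable_const _)) habs
      have h2 : ∫ ω, (Z n ω + 2 * Et) ∂μ = (∫ ω, Z n ω ∂μ) + 2 * Et := by
        rw [integral_add (hZ_int n) (integrable_const _)]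
        simp [measure_univ]
      rw [h2] at h1
      linarith [hZ_exp n]
    rw [eLpNorm_one_eq_lintegral_enorm, ← ofReal_integral_norm_eq_lintegral_enorm (hZ_int n)]
    apply ENNReal.ofReal_le_ofReal
    simpa [Real.norm_eq_abs] using hi
  have hconv : ∀ᵐ ω ∂μ, ∃ c : ℝ, Tendsto (fun n => Z n ω) atTop (nhds c) := by
    have hsub : Submartingale (-Z) 𝒢 μ := hsuper.neg
    have hbdd' : ∀ n, eLpNorm ((-Z) n) 1 μ ≤ ENNReal.ofReal ((∫ ω, Z 0 ω ∂μ) + 2 * Et) := by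
      intro n
      have : (-Z) n = -(Z n) := rfl
      rw [this, eLpNorm_neg]
      exact hbdd n
    filter_upwards [hsub.exists_ae_tendsto_of_bdd hbdd'] with ω ⟨c, hc⟩
    refine ⟨-c, ?_⟩
    have : (fun n => Z n ω) = fun n => -((-Z) n ω) := by funext n; simp
    rw [this]
    exact hc.neg
  -- pathwise conclusion
  set r₃ : ℝ := 1 - η - θ + (η - 1) * p with hr₃def
  have hr₃ : -1 < r₃ := by
    rw [hr₃def]
    nlinarith
  have hnot : ¬ Summable (fun n : ℕ => (n : ℝ) ^ r₃) := by
    rw [Real.summable_nat_rpow]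
    linarith
  filter_upwards [hconv] with ω hcω
  obtain ⟨c, hc⟩ := hcω
  set S : ℕ → ℝ := fun n => ∑ k ∈ Finset.range n, u (k+1) ω with hSdef
  set E : ℕ → ℝ := fun n => ∑ k ∈ Finset.range n, e (k+1) with hEdef
  obtain ⟨M, hM⟩ := hc.bddAbove_range
  have hM' : ∀ n, Z n ω ≤ M := fun n => hM ⟨n, rfl⟩
  have hsumu : Summable (fun k : ℕ => u (k+1) ω) := by
    refine summable_of_sum_range_le (fun k => hu_nonneg (k+1) ω) (fun n => ?_) (c := M + Et)
    have h1 := hM' n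
    have h2 := hpartial n
    have h3 : 0 ≤ a (n+1) * Y (n+1) ω := mul_nonneg (ha_nonneg _) (hY _ _)
    simp only [hZdef] at h1
    linarith
  have hS_tend : Tendsto S atTop (nhds (∑' k : ℕ, u (k+1) ω)) :=
    hsumu.hasSum.tendsto_sum_nat
  have hE_tend : Tendsto E atTop (nhds Et) := he_sum.hasSum.tendsto_sum_nat
  have hV_tend : Tendsto (fun n => a (n+1) * Y (n+1) ω) atTop
      (nhds (c - (∑' k : ℕ, u (k+1) ω) + Et)) := by
    have heq : (fun n => a (n+1) * Y (n+1) ω) = fun n => Z n ω - S n + E n := by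
      funext n
      simp only [hZdef, hSdef, hEdef]
      ring
    rw [heq]
    exact (hc.sub hS_tend).add hE_tend
  set L : ℝ := c - (∑' k : ℕ, u (k+1) ω) + Et with hLdef
  have hL0 : 0 ≤ L :=
    ge_of_tendsto' hV_tend fun n => mul_nonneg (ha_nonneg _) (hY _ _)
  have hL : L = 0 := by
    by_contra hL'
    have hLpos : 0 < L := hL0.lt_of_ne (Ne.symm hL')
    have hev : ∀ᶠ n in atTop, L / 2 ≤ a (n+1) * Y (n+1) ω :=
      hV_tend.eventually (eventually_ge_nhds (by linarith))
    obtain ⟨N, hN⟩ := eventually_atTop.mp hev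
    have hub : ∀ n : ℕ, N ≤ n →
        cB * (L / 2) ^ p * ((n+1 : ℕ) : ℝ) ^ r₃ ≤ u (n+1) ω := by
      intro n hn
      have hm1 : 1 ≤ n + 1 := Nat.le_add_left 1 n
      obtain ⟨hx1, hx0⟩ := hxfacts (n+1) hm1
      have ha_eq : a (n+1) = ((n+1 : ℕ) : ℝ) ^ (1 - η) := by rw [hadef]
      have hxp1 : (0 : ℝ) < ((n+1 : ℕ) : ℝ) ^ (1 - η) := Real.rpow_pos_of_pos hx0 _
      have hY' : L / 2 * ((n+1 : ℕ) : ℝ) ^ (η - 1) ≤ Y (n+1) ω := by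
        have h := hN n hn
        rw [ha_eq] at h
        have h2 : L / 2 * ((n+1 : ℕ) : ℝ) ^ (η - 1)
            ≤ (((n+1 : ℕ) : ℝ) ^ (1 - η) * Y (n+1) ω) * ((n+1 : ℕ) : ℝ) ^ (η - 1) :=
          mul_le_mul_of_nonneg_right h (Real.rpow_nonneg hx0.le _)
        have h3 : ((n+1 : ℕ) : ℝ) ^ (1 - η) * ((n+1 : ℕ) : ℝ) ^ (η - 1) = 1 := by
          rw [← Real.rpow_add hx0]
          norm_num
        calc L / 2 * ((n+1 : ℕ) : ℝ) ^ (η - 1)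
            ≤ (((n+1 : ℕ) : ℝ) ^ (1 - η) * Y (n+1) ω) * ((n+1 : ℕ) : ℝ) ^ (η - 1) := h2
          _ = (((n+1 : ℕ) : ℝ) ^ (1 - η) * ((n+1 : ℕ) : ℝ) ^ (η - 1)) * Y (n+1) ω := by ring
          _ = Y (n+1) ω := by rw [h3]; ring
      have hYp' : (L / 2) ^ p * ((n+1 : ℕ) : ℝ) ^ ((η - 1) * p) ≤ Y (n+1) ω ^ p := by
        have h := Real.rpow_le_rpow (by positivity) hY' (by linarith : (0:ℝ) ≤ p)
        rwa [Real.mul_rpow (by positivity) (Real.rpow_nonneg hx0.le _),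
          ← Real.rpow_mul hx0.le] at h
      have hB' := hB_low (n+1) hm1
      have hsplit : ((n+1 : ℕ) : ℝ) ^ r₃
          = ((n+1 : ℕ) : ℝ) ^ (1 - η - θ) * ((n+1 : ℕ) : ℝ) ^ ((η - 1) * p) := by
        rw [← Real.rpow_add hx0, hr₃def]
      calc cB * (L / 2) ^ p * ((n+1 : ℕ) : ℝ) ^ r₃
          = (cB * ((n+1 : ℕ) : ℝ) ^ (1 - η - θ))
            * ((L / 2) ^ p * ((n+1 : ℕ) : ℝ) ^ ((η - 1) * p)) := by
            rw [hsplit]; ring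
        _ ≤ B (n+1) * Y (n+1) ω ^ p := by
            refine mul_le_mul hB' hYp' (by positivity) (hB_pos (n+1)).le
        _ = u (n+1) ω := by simp only [hudef]
    have h1 : Summable (fun n : ℕ => u (n + N + 1) ω) := (summable_nat_add_iff N).mpr hsumu
    have h2 : Summable (fun n : ℕ => cB * (L / 2) ^ p * ((n + N + 1 : ℕ) : ℝ) ^ r₃) := by
      refine Summable.of_nonneg_of_le (fun n => ?_) (fun n => hub (n + N) (Nat.le_add_left N n)) h1
      have : (0:ℝ) < ((n + N + 1 : ℕ) : ℝ) := by positivity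
      positivity
    have hcL : (0:ℝ) < cB * (L / 2) ^ p := by positivity
    have h3 : Summable (fun n : ℕ => ((n + N + 1 : ℕ) : ℝ) ^ r₃) := by
      have h := h2.mul_left (cB * (L / 2) ^ p)⁻¹
      have heq : (fun n : ℕ => (cB * (L / 2) ^ p)⁻¹ * (cB * (L / 2) ^ p * ((n + N + 1 : ℕ) : ℝ) ^ r₃))
          = fun n : ℕ => ((n + N + 1 : ℕ) : ℝ) ^ r₃ := by
        funext n
        rw [← mul_assoc, inv_mul_cancel₀ hcL.ne']
        ring
      rwa [heq] at h
    have h4 : Summable (fun n : ℕ => (n : ℝ) ^ r₃) := (summable_nat_add_iff (N + 1)).mp h3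
    exact hnot h4
  rw [hL] at hV_tend
  have hfin : Tendsto (fun n : ℕ => a n * Y n ω) atTop (nhds 0) :=
    (tendsto_add_atTop_iff_nat 1).mp hV_tend
  exact hfin
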